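/- Let γ̂(u) = (u², u³, 0), and e(u) = (2, 3u, 0)/√(4+9u²). Then γ̂'(u) = l(u)e(u) with l(u) = u√(4+9u²); l(0) = 0 and l'(0) = 2 ≠ 0. With ν₁ = (0,0,1), b₁ = e × ν₁, the frame coefficients are κ₁₁ = 0, κ₁₂ = -6/(4+9u²), κ₁₃ = 0; and for the rotated unit normal ν₂ = (3u, -2, 2)/√(8+9u²) with angle θ between ν₁ and ν₂, one has (κ₁₁cos θ + κ₁₂sin θ)·l' ≠ 0 at u = 0. -/

import Mathlib

open Matrix Real

private lemma spos (u : ℝ) : (0:ℝ) < 4 + 9*u^2 := by positivity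

private lemma sne (u : ℝ) : Real.sqrt (4 + 9*u^2) ≠ 0 := by
  have := Real.sqrt_pos.2 (spos u); linarith

private lemma ssq (u : ℝ) : Real.sqrt (4 + 9*u^2) ^ 2 = 4 + 9*u^2 :=
  Real.sq_sqrt (le_of_lt (spos u))

private lemma hs (u : ℝ) : HasDerivAt (fun u : ℝ => Real.sqrt (4 + 9*u^2))
    (9*u / Real.sqrt (4 + 9*u^2)) u := by
  have h1 : HasDerivAt (fun u : ℝ => 4 + 9*u^2) (18*u) u := by
    have h := ((hasDerivAt_pow 2 u).const_mul 9).const_add 4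
    convert h using 1
    · rfl
    · rfl
    · simp; ring
  have h2 := h1.sqrt (by positivity)
  convert h2 using 1
  field_simp [sne u]
  ring

private lemma de0 (u : ℝ) : HasDerivAt
    (fun x : ℝ => (Real.sqrt (4 + 9*x^2))⁻¹ * 2)
    (-18*u/((4+9*u^2) * Real.sqrt (4 + 9*u^2))) u := by
  have h : HasDerivAt (fun x : ℝ => 2 / Real.sqrt (4 + 9*x^2))
      ((0 * Real.sqrt (4+9*u^2) - 2 * (9*u / Real.sqrt (4+9*u^2))) / (Real.sqrt (4+9*u^2))^2) u :=
    (hasDerivAt_const u (2:ℝ)).div (hs u) (sne u)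
  rw [ssq u] at h
  have heq : (0 * Real.sqrt (4+9*u^2) - 2 * (9*u / Real.sqrt (4+9*u^2))) / (4 + 9*u^2)
      = -18*u/((4+9*u^2) * Real.sqrt (4 + 9*u^2)) := by
    field_simp
    ring
  rw [heq] at h
  have hfun : (fun x : ℝ => (Real.sqrt (4 + 9*x^2))⁻¹ * 2)
      = fun x : ℝ => 2 / Real.sqrt (4 + 9*x^2) := by
    funext x; exact inv_mul_eq_div _ _
  rw [hfun]; exact h

private lemma de1 (u : ℝ) : HasDerivAt
    (fun x : ℝ => (Real.sqrt (4 + 9*x^2))⁻¹ * (3*x))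
    (12/((4+9*u^2) * Real.sqrt (4 + 9*u^2))) u := by
  have h3u : HasDerivAt (fun x : ℝ => 3*x) 3 u := by
    simpa using (hasDerivAt_id u).const_mul 3
  have h : HasDerivAt (fun x : ℝ => (3*x) / Real.sqrt (4 + 9*x^2))
      ((3 * Real.sqrt (4+9*u^2) - (3*u) * (9*u / Real.sqrt (4+9*u^2))) / (Real.sqrt (4+9*u^2))^2) u :=
    h3u.div (hs u) (sne u)
  rw [ssq u] at h
  have h4 : Real.sqrt (4+9*u^2) * Real.sqrt (4+9*u^2) = 4 + 9*u^2 := by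
    rw [← sq]; exact ssq u
  have heq : (3 * Real.sqrt (4+9*u^2) - (3*u) * (9*u / Real.sqrt (4+9*u^2))) / (4 + 9*u^2)
      = 12/((4+9*u^2) * Real.sqrt (4 + 9*u^2)) := by
    rw [div_eq_div_iff (spos u).ne' (by positivity)]
    field_simp
    linear_combination 3 * h4
  rw [heq] at h
  have hfun : (fun x : ℝ => (Real.sqrt (4 + 9*x^2))⁻¹ * (3*x))
      = fun x : ℝ => (3*x) / Real.sqrt (4 + 9*x^2) := by
    funext x; exact inv_mul_eq_div _ _
  rw [hfun]; exact h

theorem cuspidal_edge_example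
    (γ e ν₁ b₁ : ℝ → Fin 3 → ℝ) (l κ₁₁ κ₁₂ κ₁₃ cosθ sinθ : ℝ → ℝ)
    (hγ : γ = fun u => ![u^2, u^3, 0])
    (he : e = fun u => (Real.sqrt (4 + 9*u^2))⁻¹ • ![2, 3*u, 0])
    (hν₁ : ν₁ = fun _ => ![0, 0, 1])
    (hb₁ : b₁ = fun u => crossProduct (e u) (ν₁ u))
    (hl : l = fun u => u * Real.sqrt (4 + 9*u^2))
    (hκ₁₁ : κ₁₁ = fun u => deriv e u ⬝ᵥ ν₁ u)
    (hκ₁₂ : κ₁₂ = fun u => deriv e u ⬝ᵥ b₁ u)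
    (hκ₁₃ : κ₁₃ = fun u => deriv ν₁ u ⬝ᵥ b₁ u)
    (hcos : cosθ = fun u => 2 / Real.sqrt (8 + 9*u^2))
    (hsin : sinθ = fun u => Real.sqrt ((4 + 9*u^2) / (8 + 9*u^2))) :
    (∀ u, deriv γ u = l u • e u)
    ∧ l 0 = 0 ∧ deriv l 0 = 2 ∧ deriv l 0 ≠ 0
    ∧ (∀ u, κ₁₁ u = 0 ∧ κ₁₂ u = -6 / (4 + 9*u^2) ∧ κ₁₃ u = 0)
    ∧ (κ₁₁ 0 * cosθ 0 + κ₁₂ 0 * sinθ 0) * deriv l 0 ≠ 0 := by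
  have hγ' : ∀ u, HasDerivAt γ ![2*u, 3*u^2, 0] u := by
    intro u
    rw [hγ]
    apply hasDerivAt_pi.2
    intro i
    fin_cases i
    · simpa using (hasDerivAt_pow 2 u)
    · simpa using (hasDerivAt_pow 3 u)
    · simpa using (hasDerivAt_const u (0:ℝ))
  have he' : ∀ u, HasDerivAt e
      ![-18*u/((4+9*u^2) * Real.sqrt (4+9*u^2)), 12/((4+9*u^2) * Real.sqrt (4+9*u^2)), 0] u := by
    intro u
    rw [he]
    apply hasDerivAt_pi.2
    intro i
    fin_cases i
    · simpa using de0 u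
    · simpa using de1 u
    · simpa using (hasDerivAt_const u (0:ℝ))
  have hl' : HasDerivAt l 2 0 := by
    rw [hl]
    have h4 : Real.sqrt (4:ℝ) = 2 := by
      rw [show (4:ℝ) = 2^2 by norm_num, Real.sqrt_sq (by norm_num : (0:ℝ) ≤ 2)]
    have := (hasDerivAt_id (0:ℝ)).mul (hs 0)
    norm_num at this
    simpa [h4, Pi.mul_def] using this
  have hdl : deriv l 0 = 2 := hl'.deriv
  have hκ : ∀ u, κ₁₁ u = 0 ∧ κ₁₂ u = -6 / (4 + 9*u^2) ∧ κ₁₃ u = 0 := by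
    intro u
    have hde := (he' u).deriv
    have hne := sne u
    have hpos := spos u
    have h4 : Real.sqrt (4+9*u^2) * Real.sqrt (4+9*u^2) = 4 + 9*u^2 := by
      rw [← sq]; exact ssq u
    refine ⟨?_, ?_, ?_⟩
    · simp only [hκ₁₁, hde, hν₁, dotProduct, Fin.sum_univ_three]
      simp
    · simp only [hκ₁₂]
      rw [hde]
      simp only [hb₁, he, hν₁, crossProduct, dotProduct, Fin.sum_univ_three]
      simp
      field_simp
      nlinarith [h4, Real.sq_sqrt (le_of_lt (by positivity : (0:ℝ) < 4 + u^2*9))]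
    · simp only [hκ₁₃, hν₁]
      simp [dotProduct, Fin.sum_univ_three]
  refine ⟨?_, by simp [hl], hdl, by rw [hdl]; norm_num, hκ, ?_⟩
  · intro u
    rw [(hγ' u).deriv, hl, he]
    have hne := sne u
    funext i
    fin_cases i <;> simp <;> field_simp <;> ring
  · have h11 := (hκ 0).1
    have h12 := (hκ 0).2.1
    rw [h11, h12, hsin, hdl]
    norm_num
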